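/- The composition inverse C_p of the formal power series F_p = Σ t_n^{(p)} X^n over F_p satisfies (1 - C_p)^{p+1} X^p - (1 - C_p)^2 X + C_p = 0. -/

import Mathlib

open PowerSeries

/-- Composition `f(g(X))` of formal power series (meaningful when the
constant coefficient of `g` is zero). -/
noncomputable def PowerSeries.comp {R : Type*} [CommRing R]
    (f g : PowerSeries R) : PowerSeries R :=
  PowerSeries.mk fun n =>
    ∑ k ∈ Finset.range (n + 1), PowerSeries.coeff k f * PowerSeries.coeff n (g ^ k)

section CompLemmas

variable {R : Type*} [CommRing R] {g : R⟦X⟧}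

lemma coeff_pow_of_lt (hg : constantCoeff g = 0) {n k : ℕ} (h : n < k) : coeff n (g ^ k) = 0 := by
  have hdvd : (X : R⟦X⟧) ^ k ∣ g ^ k :=
    pow_dvd_pow_of_dvd (PowerSeries.X_dvd_iff.mpr hg) k
  exact (PowerSeries.X_pow_dvd_iff.mp hdvd) n h

/-- evaluation of a polynomial at a power series -/
noncomputable def peval (g : R⟦X⟧) (Q : Polynomial R) : R⟦X⟧ :=
  Polynomial.eval₂ (PowerSeries.C (R := R)) g Q

lemma coeff_peval_eq_zero (hg : constantCoeff g = 0) {N n : ℕ} {Q : Polynomial R} (hQ : ∀ k < N, Q.coeff k = 0)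
    (hn : n < N) : coeff n (peval g Q) = 0 := by
  rw [peval, Polynomial.eval₂_eq_sum_range]
  rw [map_sum]
  refine Finset.sum_eq_zero fun i _ => ?_
  rw [coeff_C_mul]
  by_cases hi : i < N
  · rw [hQ i hi, zero_mul]
  · rw [coeff_pow_of_lt hg (lt_of_lt_of_le hn (le_of_not_gt hi)), mul_zero]

lemma coeff_comp_eq_peval (hg : constantCoeff g = 0) (f : R⟦X⟧) {n N : ℕ} (hn : n < N) :
    coeff n (f.comp g) = coeff n (peval g (trunc N f)) := by
  rw [PowerSeries.comp, coeff_mk, peval, Polynomial.eval₂_eq_sum_range, map_sum]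
  have key : ∀ i, coeff 0 ((trunc N f).coeff i • g ^ i) = 0 → True := fun _ _ => trivial
  -- rewrite RHS terms
  have hterm : ∀ i ∈ Finset.range ((trunc N f).natDegree + 1),
      coeff n ((PowerSeries.C (R := R)) ((trunc N f).coeff i) * g ^ i)
        = coeff i f * coeff n (g ^ i) := by
    intro i hi
    rw [coeff_C_mul]
    by_cases h : i ≤ n
    · rw [PowerSeries.coeff_trunc, if_pos (lt_of_le_of_lt h hn)]
    · rw [coeff_pow_of_lt hg (lt_of_not_ge h), mul_zero, mul_zero]
  rw [Finset.sum_congr rfl hterm]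
  -- both sums equal the sum over range (max)
  have h1 : ∑ k ∈ Finset.range (n + 1), coeff k f * coeff n (g ^ k)
      = ∑ k ∈ Finset.range (max (n + 1) ((trunc N f).natDegree + 1)), coeff k f * coeff n (g ^ k) := by
    refine (Finset.sum_subset (Finset.range_subset_range.mpr (le_max_left (n + 1) ((trunc N f).natDegree + 1))) ?_)
    intro k _ hk
    rw [Finset.mem_range, not_lt] at hk
    rw [coeff_pow_of_lt hg (by omega), mul_zero]
  have h2 : ∑ k ∈ Finset.range ((trunc N f).natDegree + 1), coeff k f * coeff n (g ^ k)
      = ∑ k ∈ Finset.range (max (n + 1) ((trunc N f).natDegree + 1)), coeff k f * coeff n (g ^ k) := by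
    refine (Finset.sum_subset (Finset.range_subset_range.mpr (le_max_right (n + 1) ((trunc N f).natDegree + 1))) ?_)
    intro k hk hk'
    rw [Finset.mem_range, not_lt] at hk'
    by_cases h : k ≤ n
    · have : coeff k f = (trunc N f).coeff k := by
        rw [PowerSeries.coeff_trunc, if_pos (lt_of_le_of_lt h hn)]
      rw [this, Polynomial.coeff_eq_zero_of_natDegree_lt (by omega), zero_mul]
    · rw [coeff_pow_of_lt hg (lt_of_not_ge h), mul_zero]
  rw [h1, h2]

lemma comp_sub (f h : R⟦X⟧) : (f - h).comp g = f.comp g - h.comp g := by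
  ext n
  simp only [PowerSeries.comp, coeff_mk, map_sub, sub_mul, Finset.sum_sub_distrib]

lemma comp_add (f h : R⟦X⟧) : (f + h).comp g = f.comp g + h.comp g := by
  ext n
  simp only [PowerSeries.comp, coeff_mk, map_add, add_mul, Finset.sum_add_distrib]

lemma comp_one : (1 : R⟦X⟧).comp g = 1 := by
  ext n
  rw [PowerSeries.comp, coeff_mk]
  rw [Finset.sum_eq_single 0]
  · simp
  · intro k _ hk
    rw [coeff_one, if_neg hk, zero_mul]
  · intro h; exact absurd (Finset.mem_range.mpr n.succ_pos) h

lemma comp_X (hg : constantCoeff g = 0) : (X : R⟦X⟧).comp g = g := by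
  ext n
  rw [PowerSeries.comp, coeff_mk]
  cases n with
  | zero =>
    simp [coeff_X, hg]
  | succ m =>
    rw [Finset.sum_eq_single 1]
    · simp
    · intro k _ hk
      rw [coeff_X, if_neg hk, zero_mul]
    · intro h; exact absurd (Finset.mem_range.mpr (by omega)) h

lemma comp_mul (hg : constantCoeff g = 0) (f h : R⟦X⟧) : (f * h).comp g = f.comp g * h.comp g := by
  ext n
  rw [coeff_comp_eq_peval hg _ (Nat.lt_succ_self n)]
  rw [PowerSeries.coeff_mul]
  have hterm : ∀ q ∈ Finset.HasAntidiagonal.antidiagonal n,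
      coeff q.1 (f.comp g) * coeff q.2 (h.comp g)
        = coeff q.1 (peval g (trunc (n+1) f)) * coeff q.2 (peval g (trunc (n+1) h)) := by
    intro q hq
    rw [Finset.HasAntidiagonal.mem_antidiagonal] at hq
    rw [coeff_comp_eq_peval hg (N := n + 1) _ (by omega),
      coeff_comp_eq_peval hg (N := n + 1) _ (by omega)]
  rw [Finset.sum_congr rfl hterm, ← PowerSeries.coeff_mul]
  have : peval g (trunc (n+1) f) * peval g (trunc (n+1) h)
      = peval g (trunc (n+1) f * trunc (n+1) h) := by
    simp only [peval]
    rw [Polynomial.eval₂_mul]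
  rw [this]
  have hdiff : coeff n (peval g (trunc (n+1) f * trunc (n+1) h - trunc (n+1) (f*h))) = 0 := by
    refine coeff_peval_eq_zero hg (N := n + 1) ?_ (Nat.lt_succ_self n)
    intro k hk
    rw [Polynomial.coeff_sub]
    have h1 : (trunc (n+1) (f*h)).coeff k = coeff k (f * h) := by
      rw [PowerSeries.coeff_trunc, if_pos hk]
    have h2 : (trunc (n+1) f * trunc (n+1) h).coeff k = coeff k (f * h) := by
      have := PowerSeries.coeff_mul_eq_coeff_trunc_mul_trunc (R := R) f h hk
      rw [this, ← Polynomial.coeff_coe, Polynomial.coe_mul]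
    rw [h1, h2, sub_self]
  have hdiff' : coeff n (peval g (trunc (n+1) f * trunc (n+1) h))
      - coeff n (peval g (trunc (n+1) (f*h))) = 0 := by
    simpa only [peval, Polynomial.eval₂_sub, map_sub] using hdiff
  exact (sub_eq_zero.mp hdiff').symm

lemma comp_pow (hg : constantCoeff g = 0) (f : R⟦X⟧) (k : ℕ) : (f ^ k).comp g = f.comp g ^ k := by
  induction k with
  | zero => simpa using comp_one
  | succ m ih => rw [pow_succ, comp_mul hg, ih, pow_succ]

end CompLemmas

lemma coeff_pow_char (p : ℕ) [Fact p.Prime] (f : PowerSeries (ZMod p)) (n : ℕ) :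
    coeff n (f ^ p) = if p ∣ n then coeff (n / p) f else 0 := by
  have hp0 : 0 < p := (Fact.out : p.Prime).pos
  have h1 : coeff n (f ^ p)
      = coeff n (((trunc (n+1) f : Polynomial (ZMod p)) : PowerSeries (ZMod p)) ^ p) := by
    rw [← coeff_coe_trunc_of_lt (Nat.lt_succ_self n), ← trunc_trunc_pow,
      coeff_coe_trunc_of_lt (Nat.lt_succ_self n)]
  have h2 : (trunc (n+1) f) ^ p = Polynomial.expand (ZMod p) p (trunc (n+1) f) := by
    rw [← Polynomial.map_frobenius_expand, ZMod.frobenius_zmod, Polynomial.map_id]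
  rw [h1, ← Polynomial.coe_pow, Polynomial.coeff_coe, h2, Polynomial.coeff_expand hp0]
  split_ifs with h
  · rw [PowerSeries.coeff_trunc, if_pos (Nat.lt_succ_of_le (Nat.div_le_self n p))]
  · rfl

lemma digit_sum_rec (p : ℕ) (hp : p.Prime) (k : ℕ) :
    ((Nat.digits p k).sum : ZMod p)
      = ((k % p : ℕ) : ZMod p) + ((Nat.digits p (k / p)).sum : ZMod p) := by
  rcases Nat.eq_zero_or_pos k with rfl | hk
  · simp
  · rw [Nat.digits_def' hp.one_lt hk]
    push_cast [List.sum_cons]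
    ring

lemma one_sub_X_pow_char (p : ℕ) [Fact p.Prime] :
    ((1 : PowerSeries (ZMod p)) - X) ^ p = 1 - X ^ p := by
  have hp0 : 0 < p := (Fact.out : p.Prime).pos
  ext n
  rw [coeff_pow_char p (1 - X) n]
  simp only [map_sub, coeff_one, coeff_X, coeff_X_pow]
  by_cases h : p ∣ n
  · obtain ⟨m, rfl⟩ := h
    rw [if_pos ⟨m, rfl⟩, Nat.mul_div_cancel_left m hp0]
    have h1 : p * m = 0 ↔ m = 0 := by
      constructor
      · intro h; rcases Nat.mul_eq_zero.mp h with h | h; · omega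
        · exact h
      · rintro rfl; exact Nat.mul_zero p
    have h2 : p * m = p ↔ m = 1 := by
      constructor
      · intro h; exact Nat.eq_of_mul_eq_mul_left hp0 (by rw [h, mul_one])
      · rintro rfl; exact mul_one p
    simp only [h1, h2]
  · have h0 : n ≠ 0 := by rintro rfl; exact h (dvd_zero p)
    have h1 : n ≠ p := by rintro rfl; exact h dvd_rfl
    rw [if_neg h, if_neg h0, if_neg h1, sub_zero]

lemma key_identity (p : ℕ) (hp : p.Prime) :
    ((1 : PowerSeries (ZMod p)) - X) ^ 2 * (PowerSeries.mk fun n => ((Nat.digits p n).sum : ZMod p))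
      = (1 - X) ^ (p + 1) * (PowerSeries.mk fun n => ((Nat.digits p n).sum : ZMod p)) ^ p + X := by
  haveI : Fact p.Prime := ⟨hp⟩
  have hp0 : 0 < p := hp.pos
  set a : ℕ → ZMod p := fun n => ((Nat.digits p n).sum : ZMod p) with ha_def
  set F : PowerSeries (ZMod p) := PowerSeries.mk a with hF_def
  have ha : ∀ k, a k = ((k % p : ℕ) : ZMod p) + a (k / p) := fun k => digit_sum_rec p hp k
  have ha0 : a 0 = 0 := by simp [ha_def]
  set D : PowerSeries (ZMod p) := PowerSeries.mk (fun n => if n = 0 then 0 else 1) with hD_def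
  have hE : (1 - X) * F - (1 - X ^ p) * F ^ p = D := by
    ext n
    rw [map_sub, sub_mul, sub_mul, one_mul, one_mul, map_sub, map_sub]
    have hc1 : coeff n F = a n := coeff_mk n a
    have hc2 : coeff n (X * F) = if n = 0 then 0 else a (n - 1) := by
      cases n with
      | zero => simp [coeff_zero_eq_constantCoeff]
      | succ m => rw [coeff_succ_X_mul, coeff_mk]; simp
    have hc3 : coeff n (F ^ p) = if p ∣ n then a (n / p) else 0 := by
      rw [coeff_pow_char]
      split_ifs with h
      · rw [coeff_mk]
      · rfl
    have hc4 : coeff n (X ^ p * F ^ p)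
        = if p ≤ n then (if p ∣ n - p then a ((n - p) / p) else 0) else 0 := by
      rw [coeff_X_pow_mul']
      by_cases h : p ≤ n
      · rw [if_pos h, if_pos h, coeff_pow_char]
        by_cases h2 : p ∣ n - p
        · rw [if_pos h2, if_pos h2, coeff_mk]
        · rw [if_neg h2, if_neg h2]
      · rw [if_neg h, if_neg h]
    rw [hc2, hc3, hc4]
    simp only [hD_def, coeff_mk, hc1]
    rcases Nat.eq_zero_or_pos n with rfl | hn
    · simp [ha0, hp0.ne']
    · rw [if_neg hn.ne', if_neg hn.ne']
      obtain ⟨m, r, hrp, hnm⟩ : ∃ m r, r < p ∧ n = p * m + r :=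
        ⟨n / p, n % p, Nat.mod_lt n hp0, (Nat.div_add_mod n p).symm⟩
      have hdiv : n / p = m := by
        rw [hnm, Nat.mul_add_div hp0, Nat.div_eq_of_lt hrp, add_zero]
      have hmod : n % p = r := by
        rw [hnm, Nat.mul_add_mod, Nat.mod_eq_of_lt hrp]
      rcases Nat.eq_zero_or_pos r with hr0 | hr1
      · -- r = 0 : n = p * m with m ≥ 1
        have hneq : n = p * m := by rw [hnm, hr0, add_zero]
        have hm1 : 1 ≤ m := by
          rcases Nat.eq_zero_or_pos m with rfl | h
          · exfalso; rw [Nat.mul_zero] at hneq; omega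
          · exact h
        have hrel : p * (m - 1) + p = p * m := by
          cases m with
          | zero => omega
          | succ k => rw [Nat.succ_sub_one, Nat.mul_succ]
        have hnp' : n - p = p * (m - 1) := by rw [hneq, ← hrel, Nat.add_sub_cancel]
        have hpl : p ≤ n := by rw [hneq, ← hrel]; exact Nat.le_add_left p _
        have hpn : p ∣ n := ⟨m, hneq⟩
        have hdvd : p ∣ n - p := ⟨m - 1, hnp'⟩
        have hnp : (n - p) / p = m - 1 := by rw [hnp', Nat.mul_div_cancel_left _ hp0]
        have hn1eq : n - 1 = (p - 1) + p * (m - 1) := by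
          rw [hneq, ← hrel, Nat.add_sub_assoc hp0, Nat.add_comm]
        have han : a n = a m := by
          rw [ha n, hneq, Nat.mul_mod_right, Nat.mul_div_cancel_left _ hp0,
            Nat.cast_zero, zero_add]
        have han1 : a (n - 1) = -1 + a (m - 1) := by
          rw [ha (n - 1), hn1eq, Nat.add_mul_mod_self_left, Nat.mod_eq_of_lt (by omega),
            Nat.add_mul_div_left _ _ hp0, Nat.div_eq_of_lt (by omega), Nat.zero_add]
          congr 1
          rw [Nat.cast_sub hp0, ZMod.natCast_self]
          push_cast
          ring
        rw [if_pos hpn, if_pos hpl, if_pos hdvd, han, han1, hnp, hdiv]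
        ring
      · -- r ≥ 1
        have hpn : ¬ p ∣ n := by
          rintro ⟨c, hc⟩
          have h0 : n % p = 0 := by rw [hc]; exact Nat.mul_mod_right p c
          have : r = 0 := hmod.symm.trans h0
          omega
        have hn1eq : n - 1 = (r - 1) + p * m := by
          rw [hnm, Nat.add_sub_assoc hr1, Nat.add_comm]
        have han : a n = ((r : ℕ) : ZMod p) + a m := by rw [ha n, hmod, hdiv]
        have han1 : a (n - 1) = (((r - 1 : ℕ)) : ZMod p) + a m := by
          rw [ha (n - 1), hn1eq, Nat.add_mul_mod_self_left, Nat.mod_eq_of_lt (by omega),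
            Nat.add_mul_div_left _ _ hp0, Nat.div_eq_of_lt (by omega), Nat.zero_add]
        have hcast : ((r : ℕ) : ZMod p) - (((r - 1 : ℕ)) : ZMod p) = 1 := by
          rw [Nat.cast_sub hr1]
          push_cast
          ring
        rw [if_neg hpn, han, han1]
        by_cases hle : p ≤ n
        · have hnd : ¬ p ∣ n - p := fun hdd =>
            hpn (by rw [← Nat.sub_add_cancel hle]; exact dvd_add hdd dvd_rfl)
          rw [if_pos hle, if_neg hnd]
          linear_combination hcast
        · rw [if_neg hle]
          linear_combination hcast
  have hD : (1 - X) * D = (X : PowerSeries (ZMod p)) := by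
    ext n
    rw [sub_mul, one_mul, map_sub, coeff_X]
    match n with
    | 0 => simp [hD_def, coeff_zero_eq_constantCoeff]
    | 1 => rw [coeff_succ_X_mul]; simp [hD_def]
    | (k+2) => rw [coeff_succ_X_mul]; simp [hD_def]
  have hXp := one_sub_X_pow_char p
  have hpow : ((1 : PowerSeries (ZMod p)) - X) ^ (p + 1) = (1 - X ^ p) * (1 - X) := by
    rw [pow_succ, hXp]
  rw [hpow]
  linear_combination (1 - (X : PowerSeries (ZMod p))) * hE + hD

theorem formal_inverse_equation (p : ℕ) (hp : p.Prime)
    (F C : PowerSeries (ZMod p))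
    (hF : F = PowerSeries.mk fun n => ((Nat.digits p n).sum : ZMod p))
    (hC0 : PowerSeries.constantCoeff C = 0)
    (hFC : PowerSeries.comp F C = PowerSeries.X)
    (hCF : PowerSeries.comp C F = PowerSeries.X) :
    (1 - C) ^ (p + 1) * PowerSeries.X ^ p - (1 - C) ^ 2 * PowerSeries.X + C = 0 := by
  haveI : Fact p.Prime := ⟨hp⟩
  have key : (1 - X) ^ 2 * F = (1 - X) ^ (p + 1) * F ^ p + X := by
    rw [hF]; exact key_identity p hp
  have hcomp := congrArg (fun f => PowerSeries.comp f C) key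
  simp only [comp_add, comp_mul hC0, comp_pow hC0, comp_sub, comp_one, comp_X hC0,
    hFC] at hcomp
  linear_combination -hcomp
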